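/- Let K ⊂ ℝⁿ be a convex body and i a positive integer. Let A_i = {u ∈ Sⁿ⁻¹ : there exists x ∈ ∂K with outer unit normal u and K ⊆ B[x − i·u, i]}. Every u ∈ A_i is a regular normal vector of K (i.e., there is a unique x ∈ ∂K with outer unit normal u), and the map τ_i : A_i → ∂K sending u to this unique point is Lipschitz. -/

import Mathlib

open MeasureTheory Metric Set Filter
open scoped RealInnerProductSpace ENNReal NNReal Topology

noncomputable section

abbrev Euc (n : ℕ) := EuclideanSpace ℝ (Fin n)

def IsConvexBody {n : ℕ} (K : Set (Euc n)) : Prop :=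
  IsCompact K ∧ Convex ℝ K ∧ (interior K).Nonempty

def IsOuterNormalAt {n : ℕ} (K : Set (Euc n)) (u x : Euc n) : Prop :=
  x ∈ frontier K ∧ ∀ y ∈ K, ⟪y, u⟫ ≤ ⟪x, u⟫

open Classical in
/-- The Gauss map: at a regular boundary point, the unique outer unit normal. -/
def gaussMap {n : ℕ} (K : Set (Euc n)) (x : Euc n) : Euc n :=
  if h : ∃ u, ‖u‖ = 1 ∧ IsOuterNormalAt K u x then h.choose else 0

open Classical in
/-- The inverse Gauss map: at a regular normal vector, the unique boundary point
with that outer normal. -/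
def gaussMapInv {n : ℕ} (K : Set (Euc n)) (u : Euc n) : Euc n :=
  if h : ∃ x, IsOuterNormalAt K u x then h.choose else 0

/-- The (n-1)-th curvature measure: (n-1)-dimensional Hausdorff measure on the boundary. -/
def bdryMeasure (n : ℕ) (K : Set (Euc n)) : Measure (Euc n) :=
  (Measure.hausdorffMeasure ((n : ℝ) - 1)).restrict (frontier K)

/-- The 0-th curvature measure: C₀(K,β) = H^{n-1}(ν(K,β)), realized as the pushforward of
the spherical Hausdorff measure under the inverse Gauss map. -/
def curv0 (n : ℕ) (K : Set (Euc n)) : Measure (Euc n) :=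
  Measure.map (gaussMapInv K)
    ((Measure.hausdorffMeasure ((n : ℝ) - 1)).restrict (Metric.sphere (0 : Euc n) 1))

/-- The generalized Gauss curvature H_K, as density of C₀(K,·) w.r.t. C_{n-1}(K,·). -/
def gaussCurv (n : ℕ) (K : Set (Euc n)) : Euc n → ℝ≥0∞ :=
  Measure.rnDeriv (curv0 n K) (bdryMeasure n K)

/-- The surface area measure S_K, pushforward of boundary Hausdorff measure by the Gauss map. -/
def surfaceMeasure (n : ℕ) (K : Set (Euc n)) : Measure (Euc n) :=
  Measure.map (gaussMap K) (bdryMeasure n K)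

/-- The generalized curvature function F_K, as density of S_K w.r.t. spherical Hausdorff measure. -/
def curvFn (n : ℕ) (K : Set (Euc n)) : Euc n → ℝ≥0∞ :=
  Measure.rnDeriv (surfaceMeasure n K)
    ((Measure.hausdorffMeasure ((n : ℝ) - 1)).restrict (Metric.sphere (0 : Euc n) 1))

/-- The support function of K. -/
def suppFn {n : ℕ} (K : Set (Euc n)) (x : Euc n) : ℝ :=
  sSup ((fun y => ⟪y, x⟫) '' K)


lemma key_ineq {n : ℕ} (r : ℝ) (u x₀ y : Euc n) (hu : ‖u‖ = 1)
    (hy : y ∈ Metric.closedBall (x₀ - r • u) r) :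
    ‖y - x₀‖ ^ 2 ≤ 2 * r * ⟪x₀ - y, u⟫ := by
  rw [Metric.mem_closedBall, dist_eq_norm] at hy
  have h1 : y - (x₀ - r • u) = (y - x₀) + r • u := by abel
  rw [h1] at hy
  have h2 : ‖(y - x₀) + r • u‖ ^ 2 ≤ r ^ 2 := by
    have := sq_le_sq' (by linarith [norm_nonneg ((y - x₀) + r • u)]) hy
    simpa using this
  have h3 : ‖(y - x₀) + r • u‖ ^ 2
      = ‖y - x₀‖ ^ 2 + 2 * ⟪y - x₀, r • u⟫ + ‖r • u‖ ^ 2 := by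
    exact norm_add_sq_real _ _
  have h4 : ⟪y - x₀, r • u⟫ = r * ⟪y - x₀, u⟫ := real_inner_smul_right _ _ _
  have h5 : ‖r • u‖ ^ 2 = r ^ 2 := by
    rw [norm_smul, hu]
    simp [mul_pow, sq_abs]
  have h6 : ⟪x₀ - y, u⟫ = -⟪y - x₀, u⟫ := by
    rw [show x₀ - y = -(y - x₀) by abel, inner_neg_left]
  rw [h3, h4, h5] at h2
  rw [h6]; nlinarith

theorem statement1 (n : ℕ) (hn : 0 < n) (K : Set (Euc n)) (hK : IsConvexBody K)
    (i : ℕ) (hi : 0 < i) (Ai : Set (Euc n))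
    (hAi : Ai = {u : Euc n | u ∈ Metric.sphere (0 : Euc n) 1 ∧
      ∃ x, IsOuterNormalAt K u x ∧ K ⊆ Metric.closedBall (x - (i : ℝ) • u) i}) :
    (∀ u ∈ Ai, ∃! x, IsOuterNormalAt K u x) ∧
    ∃ C : ℝ, 0 ≤ C ∧ ∀ u₁ ∈ Ai, ∀ u₂ ∈ Ai, ∀ x₁ x₂ : Euc n,
      IsOuterNormalAt K u₁ x₁ → IsOuterNormalAt K u₂ x₂ →
      ‖x₁ - x₂‖ ≤ C * ‖u₁ - u₂‖ := by
  have hKclosed : IsClosed K := hK.1.isClosed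
  have hfr : frontier K ⊆ K := hKclosed.frontier_subset
  -- uniqueness plus ball property for the unique normal point
  have huniq : ∀ u ∈ Ai, ∀ x, IsOuterNormalAt K u x →
      K ⊆ Metric.closedBall (x - (i : ℝ) • u) i := by
    intro u hu x hx
    rw [hAi] at hu
    obtain ⟨husph, x₀, hx₀, hball⟩ := hu
    have hun : ‖u‖ = 1 := by simpa using husph
    -- show x = x₀
    have hxK : x ∈ K := hfr hx.1
    have h1 : ‖x - x₀‖ ^ 2 ≤ 2 * (i : ℝ) * ⟪x₀ - x, u⟫ :=
      key_ineq (i : ℝ) u x₀ x hun (hball hxK)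
    have h2 : ⟪x₀, u⟫ ≤ ⟪x, u⟫ := hx.2 x₀ (hfr hx₀.1)
    have h3 : ⟪x₀ - x, u⟫ ≤ 0 := by rw [inner_sub_left]; linarith
    have h4 : ‖x - x₀‖ = 0 := by nlinarith [norm_nonneg (x - x₀), (Nat.cast_nonneg i : (0:ℝ) ≤ i)]
    have hxx : x = x₀ := by
      have := norm_eq_zero.mp h4; rwa [sub_eq_zero] at this
    rwa [hxx]
  constructor
  · intro u hu
    have hu' := hu; rw [hAi] at hu'
    obtain ⟨husph, x₀, hx₀, hball⟩ := hu'
    refine ⟨x₀, hx₀, fun y hy => ?_⟩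
    have hun : ‖u‖ = 1 := by simpa using husph
    have hyK : y ∈ K := hfr hy.1
    have h1 : ‖y - x₀‖ ^ 2 ≤ 2 * (i : ℝ) * ⟪x₀ - y, u⟫ :=
      key_ineq (i : ℝ) u x₀ y hun (hball hyK)
    have h2 : ⟪x₀, u⟫ ≤ ⟪y, u⟫ := hy.2 x₀ (hfr hx₀.1)
    have h3 : ⟪x₀ - y, u⟫ ≤ 0 := by rw [inner_sub_left]; linarith
    have h4 : ‖y - x₀‖ = 0 := by nlinarith [norm_nonneg (y - x₀)]
    have := norm_eq_zero.mp h4; rwa [sub_eq_zero] at this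
  · refine ⟨i, by positivity, fun u₁ hu₁ u₂ hu₂ x₁ x₂ hx₁ hx₂ => ?_⟩
    have hb₁ := huniq u₁ hu₁ x₁ hx₁
    have hb₂ := huniq u₂ hu₂ x₂ hx₂
    rw [hAi] at hu₁ hu₂
    have hun₁ : ‖u₁‖ = 1 := by simpa using hu₁.1
    have hun₂ : ‖u₂‖ = 1 := by simpa using hu₂.1
    have hA : ‖x₂ - x₁‖ ^ 2 ≤ 2 * (i : ℝ) * ⟪x₁ - x₂, u₁⟫ :=
      key_ineq (i : ℝ) u₁ x₁ x₂ hun₁ (hb₁ (hfr hx₂.1))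
    have hB : ‖x₁ - x₂‖ ^ 2 ≤ 2 * (i : ℝ) * ⟪x₂ - x₁, u₂⟫ :=
      key_ineq (i : ℝ) u₂ x₂ x₁ hun₂ (hb₂ (hfr hx₁.1))
    have hnorm : ‖x₂ - x₁‖ = ‖x₁ - x₂‖ := norm_sub_rev _ _
    have hsum : ⟪x₁ - x₂, u₁⟫ + ⟪x₂ - x₁, u₂⟫ = ⟪x₁ - x₂, u₁ - u₂⟫ := by
      rw [show x₂ - x₁ = -(x₁ - x₂) by abel, inner_neg_left, inner_sub_right]
      ring
    have hCS : ⟪x₁ - x₂, u₁ - u₂⟫ ≤ ‖x₁ - x₂‖ * ‖u₁ - u₂‖ :=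
      real_inner_le_norm _ _
    rw [hnorm] at hA
    have hi0 : (0:ℝ) ≤ (i:ℝ) := Nat.cast_nonneg i
    have hmain : ‖x₁ - x₂‖ ^ 2 ≤ (i : ℝ) * (‖x₁ - x₂‖ * ‖u₁ - u₂‖) := by
      have := mul_le_mul_of_nonneg_left hCS hi0
      nlinarith [hA, hB, hsum, this]
    rcases eq_or_lt_of_le (norm_nonneg (x₁ - x₂)) with h0 | h0
    · rw [← h0]; positivity
    · have := (mul_le_mul_iff_of_pos_right h0).mp (by nlinarith : ‖x₁ - x₂‖ * ‖x₁ - x₂‖ ≤ ((i : ℝ) * ‖u₁ - u₂‖) * ‖x₁ - x₂‖)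
      linarith

end
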